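/- arXiv:2307.01218 — 4 statements merged into one kernel-verified Lean document; each statement's English description precedes it below -/
import Mathlib

section
/- Let A be a real m×n matrix such that AᵀA is invertible, and let λ₁ ≤ λ₂ ≤ … ≤ λₙ be the eigenvalues of AᵀA in non-decreasing order. For each ℓ ∈ {1,…,m} let a_ℓ ∈ ℝⁿ denote the ℓ-th row of A and let τ_ℓ := a_ℓᵀ (AᵀA)⁻¹ a_ℓ be its leverage score. Fix k distinct indices ℓ₁,…,ℓ_k ∈ {1,…,m} and let A' be the (m−k)×n matrix obtained from A by deleting the rows a_{ℓ₁},…,a_{ℓ_k}, with λ'₁ ≤ … ≤ λ'ₙ the eigenvalues of (A')ᵀA'. Then for every i ∈ {1,…,n}, (1 − τ_{ℓ₁} − τ_{ℓ₂} − … − τ_{ℓ_k}) · λ_i ≤ λ'_i ≤ λ_i. -/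
open Matrix

/-- The eigenvalues of a real symmetric matrix, listed in non-decreasing order
(with multiplicity); junk value `0` if the matrix is not symmetric. -/
noncomputable def sortedEigenvalues {n : ℕ} (M : Matrix (Fin n) (Fin n) ℝ) : Fin n → ℝ :=
  if h : M.IsHermitian then h.eigenvalues ∘ Tuple.sort h.eigenvalues else 0
section aux

variable {n : ℕ}

open RealInnerProductSpace

lemma inner_eq_dot (x y : EuclideanSpace ℝ (Fin n)) :
    ⟪x, y⟫ = (x : Fin n → ℝ) ⬝ᵥ (y : Fin n → ℝ) := by
  simp [PiLp.inner_apply, dotProduct, RCLike.inner_apply, conj_trivial]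
  exact Finset.sum_congr rfl fun _ _ => mul_comm _ _

lemma dot_zero_of_mem_span (b : OrthonormalBasis (Fin n) ℝ (EuclideanSpace ℝ (Fin n)))
    (s : Set (Fin n)) {j : Fin n} (hj : j ∉ s) {x : EuclideanSpace ℝ (Fin n)}
    (hx : x ∈ Submodule.span ℝ (⇑b '' s)) : ⟪b j, x⟫ = 0 := by
  induction hx using Submodule.span_induction with
  | mem y hy =>
    obtain ⟨j', hj', rfl⟩ := hy
    exact b.orthonormal.2 (fun h => hj (h ▸ hj'))
  | zero => simp
  | add y z hy hz hpy hpz => rw [inner_add_right, hpy, hpz, add_zero]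
  | smul a y hy hpy => rw [inner_smul_right, hpy, mul_zero]

lemma rayleigh_expand {M : Matrix (Fin n) (Fin n) ℝ} (hMt : Mᵀ = M)
    (b : OrthonormalBasis (Fin n) ℝ (EuclideanSpace ℝ (Fin n)))
    (μ : Fin n → ℝ) (hb : ∀ j, M *ᵥ ⇑(b j) = μ j • ⇑(b j))
    (x : EuclideanSpace ℝ (Fin n)) :
    (x : Fin n → ℝ) ⬝ᵥ (M *ᵥ (x : Fin n → ℝ)) = ∑ j, μ j * (⟪b j, x⟫)^2 ∧
      (x : Fin n → ℝ) ⬝ᵥ (x : Fin n → ℝ) = ∑ j, (⟪b j, x⟫)^2 := by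
  have key : ∀ j, ⟪b j, (WithLp.toLp 2 (M *ᵥ (x : Fin n → ℝ)) : EuclideanSpace ℝ (Fin n))⟫
      = μ j * ⟪b j, x⟫ := by
    intro j
    rw [inner_eq_dot, inner_eq_dot]
    show ⇑(b j) ⬝ᵥ (M *ᵥ (x : Fin n → ℝ)) = _
    rw [dotProduct_mulVec, ← hMt, vecMul_transpose, hb j, smul_dotProduct, smul_eq_mul]
  constructor
  · have h1 := b.sum_inner_mul_inner x (WithLp.toLp 2 (M *ᵥ (x : Fin n → ℝ)) : EuclideanSpace ℝ (Fin n))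
    rw [inner_eq_dot, WithLp.ofLp_toLp] at h1
    rw [← h1]
    refine Finset.sum_congr rfl fun j _ => ?_
    rw [key j, real_inner_comm x (b j)]
    ring
  · have h2 := b.sum_inner_mul_inner x x
    rw [inner_eq_dot] at h2
    rw [← h2]
    refine Finset.sum_congr rfl fun j _ => ?_
    rw [real_inner_comm x (b j)]
    ring

lemma rayleigh_le_of_mem_span {M : Matrix (Fin n) (Fin n) ℝ} (hMt : Mᵀ = M)
    (b : OrthonormalBasis (Fin n) ℝ (EuclideanSpace ℝ (Fin n)))
    (μ : Fin n → ℝ) (hb : ∀ j, M *ᵥ ⇑(b j) = μ j • ⇑(b j))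
    (s : Set (Fin n)) {C : ℝ} (hC : ∀ j ∈ s, μ j ≤ C)
    {x : EuclideanSpace ℝ (Fin n)} (hx : x ∈ Submodule.span ℝ (⇑b '' s)) :
    (x : Fin n → ℝ) ⬝ᵥ (M *ᵥ (x : Fin n → ℝ)) ≤ C * ((x : Fin n → ℝ) ⬝ᵥ (x : Fin n → ℝ)) := by
  obtain ⟨h1, h2⟩ := rayleigh_expand hMt b μ hb x
  rw [h1, h2, Finset.mul_sum]
  refine Finset.sum_le_sum fun j _ => ?_
  by_cases hj : j ∈ s
  · exact mul_le_mul_of_nonneg_right (hC j hj) (sq_nonneg _)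
  · rw [dot_zero_of_mem_span b s hj hx]; simp

lemma le_rayleigh_of_mem_span {M : Matrix (Fin n) (Fin n) ℝ} (hMt : Mᵀ = M)
    (b : OrthonormalBasis (Fin n) ℝ (EuclideanSpace ℝ (Fin n)))
    (μ : Fin n → ℝ) (hb : ∀ j, M *ᵥ ⇑(b j) = μ j • ⇑(b j))
    (s : Set (Fin n)) {C : ℝ} (hC : ∀ j ∈ s, C ≤ μ j)
    {x : EuclideanSpace ℝ (Fin n)} (hx : x ∈ Submodule.span ℝ (⇑b '' s)) :
    C * ((x : Fin n → ℝ) ⬝ᵥ (x : Fin n → ℝ)) ≤ (x : Fin n → ℝ) ⬝ᵥ (M *ᵥ (x : Fin n → ℝ)) := by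
  obtain ⟨h1, h2⟩ := rayleigh_expand hMt b μ hb x
  rw [h1, h2, Finset.mul_sum]
  refine Finset.sum_le_sum fun j _ => ?_
  by_cases hj : j ∈ s
  · exact mul_le_mul_of_nonneg_right (hC j hj) (sq_nonneg _)
  · rw [dot_zero_of_mem_span b s hj hx]; simp

lemma finrank_span_ob (b : OrthonormalBasis (Fin n) ℝ (EuclideanSpace ℝ (Fin n)))
    (s : Set (Fin n)) [Fintype s] :
    Module.finrank ℝ (Submodule.span ℝ (⇑b '' s)) = Fintype.card s := by
  rw [Set.image_eq_range]
  have li : LinearIndependent ℝ (fun j : s => ⇑b j.1) := by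
    have := b.toBasis.linearIndependent
    rw [OrthonormalBasis.coe_toBasis] at this
    exact this.comp _ Subtype.val_injective
  rw [finrank_span_eq_card li]

end aux

lemma sortedEigenvalues_unfold {n : ℕ} {M : Matrix (Fin n) (Fin n) ℝ} (hM : M.IsHermitian) :
    sortedEigenvalues M = hM.eigenvalues ∘ Tuple.sort hM.eigenvalues := by
  rw [sortedEigenvalues, dif_pos hM]

lemma sortedEigenvalues_monotone {n : ℕ} {M : Matrix (Fin n) (Fin n) ℝ} (hM : M.IsHermitian) :
    Monotone (sortedEigenvalues M) := by
  rw [sortedEigenvalues_unfold hM]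
  exact Tuple.monotone_sort hM.eigenvalues

/-- The sorted orthonormal eigenbasis. -/
noncomputable def sortedBasis {n : ℕ} {M : Matrix (Fin n) (Fin n) ℝ} (hM : M.IsHermitian) :
    OrthonormalBasis (Fin n) ℝ (EuclideanSpace ℝ (Fin n)) :=
  hM.eigenvectorBasis.reindex (Tuple.sort hM.eigenvalues).symm

lemma mulVec_sortedBasis {n : ℕ} {M : Matrix (Fin n) (Fin n) ℝ} (hM : M.IsHermitian) (j : Fin n) :
    M *ᵥ ⇑(sortedBasis hM j) = sortedEigenvalues M j • ⇑(sortedBasis hM j) := by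
  rw [sortedBasis, OrthonormalBasis.reindex_apply, Equiv.symm_symm, sortedEigenvalues_unfold hM]
  exact hM.mulVec_eigenvectorBasis _

lemma isHermitian_iff_transpose {n : ℕ} {M : Matrix (Fin n) (Fin n) ℝ} (hM : M.IsHermitian) :
    Mᵀ = M := by
  rw [← conjTranspose_eq_transpose_of_trivial]; exact hM

lemma sortedEigenvalues_mono {n : ℕ} {M N : Matrix (Fin n) (Fin n) ℝ}
    (hM : M.IsHermitian) (hN : N.IsHermitian) {c : ℝ} (hc : 0 ≤ c)
    (h : ∀ x : Fin n → ℝ, c * (x ⬝ᵥ (M *ᵥ x)) ≤ x ⬝ᵥ (N *ᵥ x)) (i : Fin n) :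
    c * sortedEigenvalues M i ≤ sortedEigenvalues N i := by
  classical
  set bM := sortedBasis hM
  set bN := sortedBasis hN
  set WM := Submodule.span ℝ (⇑bM '' Set.Ici i)
  set WN := Submodule.span ℝ (⇑bN '' Set.Iic i)
  have hdim : ¬ Disjoint WM WN := by
    intro hd
    have := Submodule.finrank_add_finrank_le_of_disjoint hd
    rw [show WM = Submodule.span ℝ (⇑bM '' Set.Ici i) from rfl,
      show WN = Submodule.span ℝ (⇑bN '' Set.Iic i) from rfl,
      finrank_span_ob, finrank_span_ob, Fintype.card_Ici, Fin.card_Ici, Fintype.card_Iic, Fin.card_Iic,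
      finrank_euclideanSpace_fin] at this
    omega
  rw [disjoint_iff] at hdim
  obtain ⟨x, hx, hx0⟩ := Submodule.exists_mem_ne_zero_of_ne_bot hdim
  obtain ⟨hxM, hxN⟩ := Submodule.mem_inf.mp hx
  have hB := le_rayleigh_of_mem_span (isHermitian_iff_transpose hM) bM
    (sortedEigenvalues M) (mulVec_sortedBasis hM) (Set.Ici i)
    (fun j hj => sortedEigenvalues_monotone hM hj) hxM
  have hA := rayleigh_le_of_mem_span (isHermitian_iff_transpose hN) bN
    (sortedEigenvalues N) (mulVec_sortedBasis hN) (Set.Iic i)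
    (fun j hj => sortedEigenvalues_monotone hN hj) hxN
  have hxx : 0 < (x : Fin n → ℝ) ⬝ᵥ (x : Fin n → ℝ) := by
    have h0 : (0:ℝ) ≤ (x : Fin n → ℝ) ⬝ᵥ (x : Fin n → ℝ) :=
      Finset.sum_nonneg fun i _ => mul_self_nonneg _
    rcases lt_or_eq_of_le h0 with h' | h'
    · exact h'
    · exact absurd (dotProduct_self_eq_zero.mp h'.symm : (x : Fin n → ℝ) = 0) (by simpa using hx0)
  have chain : c * sortedEigenvalues M i * ((x : Fin n → ℝ) ⬝ᵥ (x : Fin n → ℝ))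
      ≤ sortedEigenvalues N i * ((x : Fin n → ℝ) ⬝ᵥ (x : Fin n → ℝ)) := by
    calc c * sortedEigenvalues M i * ((x : Fin n → ℝ) ⬝ᵥ (x : Fin n → ℝ))
        = c * (sortedEigenvalues M i * ((x : Fin n → ℝ) ⬝ᵥ (x : Fin n → ℝ))) := by ring
      _ ≤ c * ((x : Fin n → ℝ) ⬝ᵥ (M *ᵥ (x : Fin n → ℝ))) := mul_le_mul_of_nonneg_left hB hc
      _ ≤ (x : Fin n → ℝ) ⬝ᵥ (N *ᵥ (x : Fin n → ℝ)) := h _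
      _ ≤ sortedEigenvalues N i * ((x : Fin n → ℝ) ⬝ᵥ (x : Fin n → ℝ)) := hA
  exact le_of_mul_le_mul_right chain hxx

lemma quad_form {p : Type*} [Fintype p] {n : ℕ} (B : Matrix p (Fin n) ℝ) (x y : Fin n → ℝ) :
    x ⬝ᵥ ((Bᵀ * B) *ᵥ y) = (B *ᵥ x) ⬝ᵥ (B *ᵥ y) := by
  rw [← mulVec_mulVec, dotProduct_mulVec, vecMul_transpose]

/-- **Eigenvalue perturbation via leverage scores.**
Let `A` be a real `m × n` matrix with `AᵀA` invertible and sorted eigenvalues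
`λ₁ ≤ … ≤ λₙ` of `AᵀA`.  For each row `ℓ` let `τ ℓ = aℓᵀ (AᵀA)⁻¹ aℓ` be its leverage score.
If `A'` is obtained from `A` by deleting the `k` distinct rows indexed by a set `S` of size `k`,
with sorted eigenvalues `λ'₁ ≤ … ≤ λ'ₙ` of `(A')ᵀA'`, then for every `i`,
`(1 - Σ_{ℓ ∈ S} τ ℓ) · λᵢ ≤ λ'ᵢ ≤ λᵢ`. -/
theorem leverage_score_eigenvalue_perturbation
    {m n k : ℕ} (A : Matrix (Fin m) (Fin n) ℝ)
    (hinv : IsUnit (Aᵀ * A))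
    (τ : Fin m → ℝ)
    (hτ : ∀ ℓ : Fin m, τ ℓ = A ℓ ⬝ᵥ ((Aᵀ * A)⁻¹ *ᵥ A ℓ))
    (S : Finset (Fin m)) (hS : S.card = k)
    (A' : Matrix {i : Fin m // i ∉ S} (Fin n) ℝ)
    (hA' : ∀ (i : {i : Fin m // i ∉ S}) (j : Fin n), A' i j = A i.1 j)
    (i : Fin n) :
    (1 - ∑ ℓ ∈ S, τ ℓ) * sortedEigenvalues (Aᵀ * A) i ≤ sortedEigenvalues (A'ᵀ * A') i ∧
      sortedEigenvalues (A'ᵀ * A') i ≤ sortedEigenvalues (Aᵀ * A) i := by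
  classical
  have hM : (Aᵀ * A).IsHermitian := by
    have := isHermitian_conjTranspose_mul_self A
    rwa [conjTranspose_eq_transpose_of_trivial] at this
  have hM' : (A'ᵀ * A').IsHermitian := by
    have := isHermitian_conjTranspose_mul_self A'
    rwa [conjTranspose_eq_transpose_of_trivial] at this
  have quad : ∀ x : Fin n → ℝ, x ⬝ᵥ ((Aᵀ * A) *ᵥ x) = ∑ ℓ : Fin m, (A ℓ ⬝ᵥ x) ^ 2 := by
    intro x
    rw [quad_form]
    simp [dotProduct, mulVec, sq]
  have quad' : ∀ x : Fin n → ℝ, x ⬝ᵥ ((A'ᵀ * A') *ᵥ x) = ∑ ℓ ∈ Sᶜ, (A ℓ ⬝ᵥ x) ^ 2 := by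
    intro x
    rw [quad_form]
    have e1 : (A' *ᵥ x) ⬝ᵥ (A' *ᵥ x) = ∑ ℓ : {i : Fin m // i ∉ S}, (A ℓ.1 ⬝ᵥ x) ^ 2 := by
      have hrow : ∀ ℓ : {i : Fin m // i ∉ S}, A' ℓ = A ℓ.1 := fun ℓ => funext (hA' ℓ)
      simp [dotProduct, mulVec, sq, hrow]
    rw [e1, ← Finset.sum_subtype (Sᶜ) (fun x => Finset.mem_compl) (fun ℓ => (A ℓ ⬝ᵥ x) ^ 2)]
  -- upper bound
  have upper : sortedEigenvalues (A'ᵀ * A') i ≤ sortedEigenvalues (Aᵀ * A) i := by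
    have := sortedEigenvalues_mono hM' hM (c := 1) zero_le_one (fun x => by
      rw [one_mul, quad, quad']
      exact Finset.sum_le_sum_of_subset_of_nonneg (Finset.subset_univ _)
        (fun ℓ _ _ => sq_nonneg _)) i
    simpa using this
  refine ⟨?_, upper⟩
  -- Cauchy–Schwarz per row
  have cs : ∀ (ℓ : Fin m) (x : Fin n → ℝ),
      (A ℓ ⬝ᵥ x) ^ 2 ≤ τ ℓ * (x ⬝ᵥ ((Aᵀ * A) *ᵥ x)) := by
    intro ℓ x
    have hdet : IsUnit (Aᵀ * A).det := (Matrix.isUnit_iff_isUnit_det _).mp hinv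
    set y : Fin n → ℝ := (Aᵀ * A)⁻¹ *ᵥ A ℓ with hy
    have hMy : (Aᵀ * A) *ᵥ y = A ℓ := by
      rw [hy, mulVec_mulVec, Matrix.mul_nonsing_inv _ hdet, one_mulVec]
    have hsym : ((Aᵀ * A) *ᵥ y) ⬝ᵥ x = y ⬝ᵥ ((Aᵀ * A) *ᵥ x) := by
      rw [dotProduct_comm, quad_form, quad_form, dotProduct_comm]
    have hax : A ℓ ⬝ᵥ x = (A *ᵥ y) ⬝ᵥ (A *ᵥ x) := by
      rw [← hMy, hsym, quad_form]
    have hτ2 : τ ℓ = (A *ᵥ y) ⬝ᵥ (A *ᵥ y) := by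
      rw [hτ ℓ, ← quad_form, ← hy, hMy, dotProduct_comm]
    have cs' := Finset.sum_mul_sq_le_sq_mul_sq Finset.univ (A *ᵥ y) (A *ᵥ x)
    have e1 : (A *ᵥ y) ⬝ᵥ (A *ᵥ y) = ∑ j, (A *ᵥ y) j ^ 2 := by simp [dotProduct, sq]
    have e2 : (A *ᵥ x) ⬝ᵥ (A *ᵥ x) = ∑ j, (A *ᵥ x) j ^ 2 := by simp [dotProduct, sq]
    rw [hax, hτ2, quad_form, e1, e2]
    exact cs'
  rcases le_or_gt 0 (1 - ∑ ℓ ∈ S, τ ℓ) with hc | hc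
  · refine sortedEigenvalues_mono hM hM' hc (fun x => ?_) i
    have hsplit : ∑ ℓ ∈ S, (A ℓ ⬝ᵥ x) ^ 2 + ∑ ℓ ∈ Sᶜ, (A ℓ ⬝ᵥ x) ^ 2
        = ∑ ℓ : Fin m, (A ℓ ⬝ᵥ x) ^ 2 := Finset.sum_add_sum_compl S _
    have hcs : ∑ ℓ ∈ S, (A ℓ ⬝ᵥ x) ^ 2
        ≤ (∑ ℓ ∈ S, τ ℓ) * (x ⬝ᵥ ((Aᵀ * A) *ᵥ x)) := by
      rw [Finset.sum_mul]
      exact Finset.sum_le_sum fun ℓ _ => cs ℓ x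
    rw [quad'] at *
    rw [quad x] at *
    nlinarith [hsplit, hcs]
  · have hlam : 0 ≤ sortedEigenvalues (Aᵀ * A) i := by
      rw [sortedEigenvalues_unfold hM]
      have hps : (Aᵀ * A).PosSemidef := by
        have := posSemidef_conjTranspose_mul_self A
        rwa [conjTranspose_eq_transpose_of_trivial] at this
      exact hps.eigenvalues_nonneg _
    have hlam' : 0 ≤ sortedEigenvalues (A'ᵀ * A') i := by
      rw [sortedEigenvalues_unfold hM']
      have hps : (A'ᵀ * A').PosSemidef := by
        have := posSemidef_conjTranspose_mul_self A'
        rwa [conjTranspose_eq_transpose_of_trivial] at this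
      exact hps.eigenvalues_nonneg _
    exact le_trans (mul_nonpos_of_nonpos_of_nonneg hc.le hlam) hlam'
end

section
/- Let G = (V,E) be a finite simple graph on n vertices, let L_G be its Laplacian matrix with eigenvalues λ₁(G) ≤ … ≤ λₙ(G) in non-decreasing order, and let {u,v} ∈ E be an edge of G. Let G' = (V, E \ {{u,v}}) be the graph obtained from G by removing the edge {u,v}, with Laplacian eigenvalues λ₁(G') ≤ … ≤ λₙ(G'). Then for every i ∈ {1,…,n}, λ_i(G') ≥ (1 − R_G(u,v)) · λ_i(G), where R_G(u,v) is the u–v effective resistance of G. -/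
open Matrix

open Classical in
/-- The Dirichlet energy `Σ_{{u,v} ∈ E} (φ u - φ v)²` of a potential `φ`,
written as half the sum over ordered pairs. -/
noncomputable def energy {V : Type*} [Fintype V] (G : SimpleGraph V) (φ : V → ℝ) : ℝ :=
  (1/2) * ∑ u : V, ∑ v : V, if G.Adj u v then (φ u - φ v)^2 else 0

/-- The `s`-`t` effective resistance: the reciprocal of the minimal Dirichlet energy among
potentials with `φ s = 1` and `φ t = 0`. -/
noncomputable def effRes {V : Type*} [Fintype V] (G : SimpleGraph V) (s t : V) : ℝ :=
  1 / sInf (energy G '' {φ : V → ℝ | φ s = 1 ∧ φ t = 0})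

open Classical in
/-- The (real) Laplacian matrix of a graph on `Fin n`. -/
noncomputable def lap {n : ℕ} (G : SimpleGraph (Fin n)) : Matrix (Fin n) (Fin n) ℝ :=
  G.lapMatrix ℝ

open scoped RealInnerProductSpace

lemma dot_sum' {n : ℕ} (x : Fin n → ℝ) (f : Fin n → Fin n → ℝ) :
    x ⬝ᵥ (∑ k, f k) = ∑ k, x ⬝ᵥ f k := by
  simp only [dotProduct, Finset.sum_apply, Finset.mul_sum]
  exact Finset.sum_comm

lemma quadform_eq {n : ℕ} {A : Matrix (Fin n) (Fin n) ℝ} (hA : A.IsHermitian)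
    (x : EuclideanSpace ℝ (Fin n)) :
    (x : Fin n → ℝ) ⬝ᵥ A *ᵥ (x : Fin n → ℝ)
      = ∑ k, hA.eigenvalues k * (⟪hA.eigenvectorBasis k, x⟫)^2 := by
  set b := hA.eigenvectorBasis with hb
  have hx : ∑ k, ⟪b k, x⟫ • b k = x := b.sum_repr' x
  have hdot : ∀ k, (x : Fin n → ℝ) ⬝ᵥ (b k : Fin n → ℝ) = ⟪b k, x⟫ := by
    intro k; rw [real_inner_comm]; simp [PiLp.inner_apply, dotProduct]; exact Finset.sum_congr rfl fun _ _ => mul_comm _ _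
  have hAx : A *ᵥ (x : Fin n → ℝ)
      = ∑ k, (hA.eigenvalues k * ⟪b k, x⟫) • (b k : Fin n → ℝ) := by
    conv_lhs => rw [← hx]
    have h2 : A *ᵥ (∑ k, ⟪b k, x⟫ • b k : EuclideanSpace ℝ (Fin n))
        = A.mulVecLin (∑ k, ⟪b k, x⟫ • (b k : Fin n → ℝ)) := by
      simp only [WithLp.ofLp_sum, WithLp.ofLp_smul]; rfl
    rw [h2, map_sum]
    refine Finset.sum_congr rfl fun k _ => ?_
    rw [A.mulVecLin.map_smul, mulVecLin_apply]
    erw [hA.mulVec_eigenvectorBasis]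
    rw [smul_smul, mul_comm]
  rw [hAx, dot_sum']
  refine Finset.sum_congr rfl fun k _ => ?_
  rw [dotProduct_smul, smul_eq_mul, hdot]
  ring

lemma normsq_eq {n : ℕ} (b : OrthonormalBasis (Fin n) ℝ (EuclideanSpace ℝ (Fin n)))
    (x : EuclideanSpace ℝ (Fin n)) :
    (x : Fin n → ℝ) ⬝ᵥ (x : Fin n → ℝ) = ∑ k, (⟪b k, x⟫)^2 := by
  have hx : ∑ k, ⟪b k, x⟫ • b k = x := b.sum_repr' x
  have hdot : ∀ k, (x : Fin n → ℝ) ⬝ᵥ (b k : Fin n → ℝ) = ⟪b k, x⟫ := by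
    intro k; rw [real_inner_comm]; simp [PiLp.inner_apply, dotProduct]; exact Finset.sum_congr rfl fun _ _ => mul_comm _ _
  have h2 : ((x : Fin n → ℝ) ⬝ᵥ (x : Fin n → ℝ))
      = ((x : Fin n → ℝ) ⬝ᵥ (∑ k, ⟪b k, x⟫ • (b k : Fin n → ℝ))) :=
    by have := congrArg (fun y : EuclideanSpace ℝ (Fin n) => (x : Fin n → ℝ) ⬝ᵥ (y : Fin n → ℝ)) hx.symm
       simpa only [WithLp.ofLp_sum, WithLp.ofLp_smul] using this
  rw [h2, dot_sum']
  refine Finset.sum_congr rfl fun k _ => ?_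
  rw [dotProduct_smul, smul_eq_mul, hdot]
  ring

lemma sorted_le_of_quadform {n : ℕ} {A B : Matrix (Fin n) (Fin n) ℝ}
    (hA : A.IsHermitian) (hB : B.IsHermitian) {c : ℝ} (hc : 0 ≤ c)
    (h : ∀ x : Fin n → ℝ, c * (x ⬝ᵥ A *ᵥ x) ≤ x ⬝ᵥ B *ᵥ x) (i : Fin n) :
    c * sortedEigenvalues A i ≤ sortedEigenvalues B i := by
  have hsA : sortedEigenvalues A = hA.eigenvalues ∘ Tuple.sort hA.eigenvalues := dif_pos hA
  have hsB : sortedEigenvalues B = hB.eigenvalues ∘ Tuple.sort hB.eigenvalues := dif_pos hB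
  set σ := Tuple.sort hA.eigenvalues with hσ
  set τ := Tuple.sort hB.eigenvalues with hτ
  set bA := hA.eigenvectorBasis with hbA
  set bB := hB.eigenvectorBasis with hbB
  let T : EuclideanSpace ℝ (Fin n) →ₗ[ℝ] ({k : Fin n // k ≠ i} → ℝ) :=
    { toFun := fun x k => if (k : Fin n) < i then ⟪bA (σ k), x⟫ else ⟪bB (τ k), x⟫
      map_add' := by
        intro x y; funext k
        by_cases hk : (k : Fin n) < i <;> simp [hk, inner_add_right]
      map_smul' := by
        intro a x; funext k
        by_cases hk : (k : Fin n) < i <;> simp [hk, inner_smul_right] }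
  have hcard : Fintype.card {k : Fin n // k ≠ i} = n - 1 := by
    simp [Fintype.card_subtype_compl]
  have hpos : 0 < n := i.pos
  have hni : ¬ Function.Injective T := by
    intro hinj
    have := LinearMap.finrank_le_finrank_of_injective hinj
    rw [finrank_euclideanSpace_fin, Module.finrank_pi, hcard] at this
    omega
  rw [Function.not_injective_iff] at hni
  obtain ⟨a, b, hab, hne⟩ := hni
  set z : EuclideanSpace ℝ (Fin n) := a - b with hzdef
  have hz : z ≠ 0 := sub_ne_zero_of_ne hne
  have hTz : T z = 0 := by rw [hzdef, map_sub, hab, sub_self]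
  have hTzA : ∀ k : Fin n, k < i → ⟪bA (σ k), z⟫ = 0 := by
    intro k hk
    have h0 := congrFun hTz ⟨k, hk.ne⟩
    simpa [T, hk] using h0
  have hTzB : ∀ k : Fin n, i < k → ⟪bB (τ k), z⟫ = 0 := by
    intro k hk
    have h0 := congrFun hTz ⟨k, hk.ne'⟩
    simpa [T, not_lt.mpr hk.le] using h0
  have hzz : 0 < (z : Fin n → ℝ) ⬝ᵥ (z : Fin n → ℝ) := by
    have hzj : ∃ j, (z : Fin n → ℝ) j ≠ 0 := by
      by_contra hcon
      push_neg at hcon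
      exact hz (by ext j; simpa using hcon j)
    obtain ⟨j, hj⟩ := hzj
    have hd : (z : Fin n → ℝ) ⬝ᵥ (z : Fin n → ℝ) = ∑ k, ((z : Fin n → ℝ) k)^2 := by
      simp [dotProduct, sq]
    rw [hd]
    exact Finset.sum_pos' (fun k _ => sq_nonneg _) ⟨j, Finset.mem_univ j, by positivity⟩
  have hAside : sortedEigenvalues A i * ((z : Fin n → ℝ) ⬝ᵥ (z : Fin n → ℝ))
      ≤ (z : Fin n → ℝ) ⬝ᵥ A *ᵥ (z : Fin n → ℝ) := by
    rw [quadform_eq hA z, normsq_eq bA z, Finset.mul_sum]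
    rw [← Equiv.sum_comp σ (fun k => sortedEigenvalues A i * (⟪bA k, z⟫)^2),
        ← Equiv.sum_comp σ (fun k => hA.eigenvalues k * (⟪bA k, z⟫)^2)]
    refine Finset.sum_le_sum fun j _ => ?_
    rcases lt_or_ge j i with hj | hj
    · rw [hTzA j hj]; simp
    · have hmono : sortedEigenvalues A i ≤ hA.eigenvalues (σ j) := by
        rw [hsA]; exact Tuple.monotone_sort hA.eigenvalues hj
      exact mul_le_mul_of_nonneg_right hmono (sq_nonneg _)
  have hBside : (z : Fin n → ℝ) ⬝ᵥ B *ᵥ (z : Fin n → ℝ)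
      ≤ sortedEigenvalues B i * ((z : Fin n → ℝ) ⬝ᵥ (z : Fin n → ℝ)) := by
    rw [quadform_eq hB z, normsq_eq bB z, Finset.mul_sum]
    rw [← Equiv.sum_comp τ (fun k => sortedEigenvalues B i * (⟪bB k, z⟫)^2),
        ← Equiv.sum_comp τ (fun k => hB.eigenvalues k * (⟪bB k, z⟫)^2)]
    refine Finset.sum_le_sum fun j _ => ?_
    rcases lt_or_ge i j with hj | hj
    · rw [hTzB j hj]; simp
    · have hmono : hB.eigenvalues (τ j) ≤ sortedEigenvalues B i := by
        rw [hsB]; exact Tuple.monotone_sort hB.eigenvalues hj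
      exact mul_le_mul_of_nonneg_right hmono (sq_nonneg _)
  have hchain : (c * sortedEigenvalues A i) * ((z : Fin n → ℝ) ⬝ᵥ (z : Fin n → ℝ))
      ≤ sortedEigenvalues B i * ((z : Fin n → ℝ) ⬝ᵥ (z : Fin n → ℝ)) := by
    calc (c * sortedEigenvalues A i) * ((z : Fin n → ℝ) ⬝ᵥ (z : Fin n → ℝ))
        = c * (sortedEigenvalues A i * ((z : Fin n → ℝ) ⬝ᵥ (z : Fin n → ℝ))) := by ring
      _ ≤ c * ((z : Fin n → ℝ) ⬝ᵥ A *ᵥ (z : Fin n → ℝ)) := by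
          exact mul_le_mul_of_nonneg_left hAside hc
      _ ≤ (z : Fin n → ℝ) ⬝ᵥ B *ᵥ (z : Fin n → ℝ) := h z
      _ ≤ sortedEigenvalues B i * ((z : Fin n → ℝ) ⬝ᵥ (z : Fin n → ℝ)) := hBside
  exact le_of_mul_le_mul_right hchain hzz

lemma energy_nonneg {V : Type*} [Fintype V] (G : SimpleGraph V) (φ : V → ℝ) :
    0 ≤ energy G φ := by
  unfold energy
  positivity

lemma lap_quadform {n : ℕ} (G : SimpleGraph (Fin n)) (x : Fin n → ℝ) :
    x ⬝ᵥ lap G *ᵥ x = energy G x := by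
  unfold lap energy
  rw [← Matrix.toLinearMap₂'_apply', SimpleGraph.lapMatrix_toLinearMap₂']
  ring

lemma energy_ge_edge {V : Type*} [Fintype V] (G : SimpleGraph V) (φ : V → ℝ) {u v : V}
    (huv : G.Adj u v) : (φ u - φ v)^2 ≤ energy G φ := by
  classical
  have hne : u ≠ v := huv.ne
  set f : V → V → ℝ := fun a b => if G.Adj a b then (φ a - φ b)^2 else 0 with hf
  have hfnn : ∀ a b, 0 ≤ f a b := by
    intro a b; rw [hf]; dsimp only; split <;> positivity
  have hgu : f u v ≤ ∑ b, f u b := Finset.single_le_sum (fun b _ => hfnn u b) (Finset.mem_univ v)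
  have hgv : f v u ≤ ∑ b, f v b := Finset.single_le_sum (fun b _ => hfnn v b) (Finset.mem_univ u)
  have hsum : (∑ b, f u b) + (∑ b, f v b) ≤ ∑ a, ∑ b, f a b := by
    have h := Finset.sum_le_sum_of_subset_of_nonneg (f := fun a => ∑ b, f a b)
      (Finset.subset_univ ({u,v} : Finset V))
      (fun a _ _ => Finset.sum_nonneg fun b _ => hfnn a b)
    rwa [Finset.sum_pair hne] at h
  have hfu : f u v = (φ u - φ v)^2 := by simp [hf, huv]
  have hfv : f v u = (φ v - φ u)^2 := by simp [hf, huv.symm]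
  have hsq : (φ v - φ u)^2 = (φ u - φ v)^2 := by ring
  have henergy : energy G φ = (1/2) * ∑ a, ∑ b, f a b := rfl
  rw [henergy]
  rw [hfu] at hgu
  rw [hfv, hsq] at hgv
  linarith

lemma energy_smul_shift {V : Type*} [Fintype V] (G : SimpleGraph V) (x : V → ℝ) (d c : ℝ) :
    energy G (fun w => (x w - d) / c) = energy G x / c^2 := by
  classical
  unfold energy
  dsimp only
  rw [mul_div_assoc]
  congr 1
  rw [Finset.sum_div]
  refine Finset.sum_congr rfl fun a _ => ?_
  rw [Finset.sum_div]
  refine Finset.sum_congr rfl fun b _ => ?_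
  split
  · rw [div_sub_div_same, sub_sub_sub_cancel_right, div_pow]
  · rw [zero_div]

lemma energy_delete {V : Type*} [Fintype V] (G : SimpleGraph V) {u v : V}
    (huv : G.Adj u v) (x : V → ℝ) :
    energy (G.deleteEdges {s(u,v)}) x = energy G x - (x u - x v)^2 := by
  classical
  have key : ∀ a b : V, (@ite _ ((G.deleteEdges {s(u,v)}).Adj a b) (Classical.propDecidable _) ((x a - x b)^2) 0)
      = (if G.Adj a b then (x a - x b)^2 else 0)
        - (if a = u ∧ b = v then (x a - x b)^2 else 0)
        - (if a = v ∧ b = u then (x a - x b)^2 else 0) := by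
    intro a b
    have hadj : (G.deleteEdges {s(u,v)}).Adj a b ↔
        G.Adj a b ∧ ¬(a = u ∧ b = v) ∧ ¬(a = v ∧ b = u) := by
      rw [SimpleGraph.deleteEdges_adj]
      simp only [Set.mem_singleton_iff, Sym2.eq, Sym2.rel_iff', Prod.mk.injEq, Prod.swap_prod_mk]
      tauto
    by_cases h1 : a = u ∧ b = v
    · obtain ⟨rfl, rfl⟩ := h1
      simp [hadj, huv, huv.ne]
    · by_cases h2 : a = v ∧ b = u
      · obtain ⟨rfl, rfl⟩ := h2
        simp [hadj, huv.symm, h1]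
      · simp [hadj, h1, h2]
  unfold energy
  simp only [key, Finset.sum_sub_distrib]
  have d1 : ∑ a : V, ∑ b : V, (if a = u ∧ b = v then (x a - x b)^2 else 0) = (x u - x v)^2 := by
    simp [ite_and, Finset.sum_ite_eq]
  have d2 : ∑ a : V, ∑ b : V, (if a = v ∧ b = u then (x a - x b)^2 else 0) = (x v - x u)^2 := by
    simp [ite_and, Finset.sum_ite_eq]
  rw [d1, d2]
  ring

lemma inf_bddBelow {V : Type*} [Fintype V] (G : SimpleGraph V) (u v : V) :
    BddBelow (energy G '' {φ : V → ℝ | φ u = 1 ∧ φ v = 0}) := by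
  refine ⟨0, fun y hy => ?_⟩
  obtain ⟨φ, _, rfl⟩ := hy
  exact energy_nonneg G φ

lemma one_le_inf {V : Type*} [Fintype V] (G : SimpleGraph V) {u v : V} (huv : G.Adj u v) :
    1 ≤ sInf (energy G '' {φ : V → ℝ | φ u = 1 ∧ φ v = 0}) := by
  classical
  apply le_csInf
  · exact ⟨energy G (fun w => if w = u then 1 else 0),
      ⟨fun w => if w = u then 1 else 0, ⟨by simp, by simp [huv.ne']⟩, rfl⟩⟩
  · rintro y ⟨φ, ⟨hφu, hφv⟩, rfl⟩
    have h := energy_ge_edge G φ huv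
    rw [hφu, hφv] at h
    simpa using h

lemma inf_mul_sq_le {V : Type*} [Fintype V] (G : SimpleGraph V) {u v : V} (huv : G.Adj u v)
    (x : V → ℝ) :
    sInf (energy G '' {φ : V → ℝ | φ u = 1 ∧ φ v = 0}) * (x u - x v)^2 ≤ energy G x := by
  classical
  by_cases hc : x u = x v
  · rw [hc]
    simpa using energy_nonneg G x
  · set c : ℝ := x u - x v with hcdef
    have hc' : c ≠ 0 := sub_ne_zero_of_ne hc
    have hmem : energy G (fun w => (x w - x v)/c) ∈
        energy G '' {φ : V → ℝ | φ u = 1 ∧ φ v = 0} := by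
      refine ⟨fun w => (x w - x v)/c, ⟨?_, ?_⟩, rfl⟩
      · simp only [Set.mem_setOf_eq, ← hcdef]
        exact div_self hc'
      · simp
    have hE := csInf_le (inf_bddBelow G u v) hmem
    rw [energy_smul_shift] at hE
    have hc2 : (0:ℝ) < c^2 := by positivity
    calc sInf (energy G '' {φ : V → ℝ | φ u = 1 ∧ φ v = 0}) * c^2
        ≤ (energy G x / c^2) * c^2 := mul_le_mul_of_nonneg_right hE hc2.le
      _ = energy G x := div_mul_cancel₀ _ (ne_of_gt hc2)

/-- **Laplacian eigenvalues after removing an edge.**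
If `G'` is obtained from `G` by removing an edge `{u,v}`, then for every `i`,
`λᵢ(G') ≥ (1 − R_G(u,v)) · λᵢ(G)`, where `R_G(u,v)` is the effective resistance. -/

theorem lap_eigenvalue_removing_edge_eff_res
    {n : ℕ} (G : SimpleGraph (Fin n)) (u v : Fin n) (huv : G.Adj u v) (i : Fin n) :
    (1 - effRes G u v) * sortedEigenvalues (lap G) i ≤
      sortedEigenvalues (lap (G.deleteEdges {s(u, v)})) i := by
  classical
  have hE1 : 1 ≤ sInf (energy G '' {φ : Fin n → ℝ | φ u = 1 ∧ φ v = 0}) := one_le_inf G huv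
  have hEpos : 0 < sInf (energy G '' {φ : Fin n → ℝ | φ u = 1 ∧ φ v = 0}) :=
    lt_of_lt_of_le one_pos hE1
  have hR : effRes G u v = 1 / sInf (energy G '' {φ : Fin n → ℝ | φ u = 1 ∧ φ v = 0}) := rfl
  have hc : 0 ≤ 1 - effRes G u v := by
    rw [hR, sub_nonneg, div_le_one hEpos]
    exact hE1
  have hqf : ∀ x : Fin n → ℝ, (1 - effRes G u v) * (x ⬝ᵥ lap G *ᵥ x)
      ≤ x ⬝ᵥ lap (G.deleteEdges {s(u, v)}) *ᵥ x := by
    intro x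
    rw [lap_quadform, lap_quadform, energy_delete G huv x, hR]
    have hkey := inf_mul_sq_le G huv x
    have h2 : (x u - x v)^2 ≤
        (1 / sInf (energy G '' {φ : Fin n → ℝ | φ u = 1 ∧ φ v = 0})) * energy G x := by
      rw [div_mul_eq_mul_div, le_div_iff₀ hEpos, one_mul, mul_comm]
      exact hkey
    have h3 : (1 - 1 / sInf (energy G '' {φ : Fin n → ℝ | φ u = 1 ∧ φ v = 0})) * energy G x
        = energy G x
          - (1 / sInf (energy G '' {φ : Fin n → ℝ | φ u = 1 ∧ φ v = 0})) * energy G x := by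
      ring
    linarith
  have hHA : (lap G).IsHermitian := by
    unfold lap
    exact (SimpleGraph.posSemidef_lapMatrix ℝ G).1
  have hHB : (lap (G.deleteEdges {s(u, v)})).IsHermitian := by
    unfold lap
    convert (SimpleGraph.posSemidef_lapMatrix ℝ (G.deleteEdges {s(u, v)})).1
  exact sorted_le_of_quadform hHA hHB hc hqf i
end

section
/- (Foster's theorem.) Let G = (V,E) be a connected finite simple graph on n ≥ 2 vertices. Then the sum of the effective resistances over all edges equals n − 1: Σ_{{u,v} ∈ E} R_G(u,v) = n − 1. -/
namespace FosterAux
set_option linter.unusedSectionVars false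

open Matrix Finset

variable {n : ℕ} (G : SimpleGraph (Fin n)) [DecidableRel G.Adj]

lemma energy_eq (φ : Fin n → ℝ) : energy G φ = φ ⬝ᵥ (G.lapMatrix ℝ *ᵥ φ) := by
  rw [← Matrix.toLinearMap₂'_apply', SimpleGraph.lapMatrix_toLinearMap₂', energy]
  have h2 : ∀ (a b : ℝ), a = b → 1/2 * a = b / 2 := by intros a b h; rw [h]; ring
  apply h2
  congr!

lemma dot_symm (A : Matrix (Fin n) (Fin n) ℝ) (hA : A.IsSymm) (x y : Fin n → ℝ) :
    x ⬝ᵥ (A *ᵥ y) = y ⬝ᵥ (A *ᵥ x) := by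
  rw [Matrix.dotProduct_mulVec, ← Matrix.mulVec_transpose, hA.eq, dotProduct_comm]


/-- all-ones matrix -/
def Jmat (n : ℕ) : Matrix (Fin n) (Fin n) ℝ := Matrix.of fun _ _ => 1

noncomputable def Mmat : Matrix (Fin n) (Fin n) ℝ := G.lapMatrix ℝ + (n : ℝ)⁻¹ • Jmat n

noncomputable def Hmat : Matrix (Fin n) (Fin n) ℝ := (Mmat G)⁻¹

def bvec (s t : Fin n) : Fin n → ℝ := Pi.single s 1 - Pi.single t 1

lemma Jmat_mulVec (x : Fin n → ℝ) : Jmat n *ᵥ x = fun _ => ∑ i, x i := by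
  ext i; simp [Jmat, mulVec, dotProduct]

lemma dot_J (x : Fin n → ℝ) : x ⬝ᵥ (Jmat n *ᵥ x) = (∑ i, x i)^2 := by
  rw [Jmat_mulVec]
  simp [dotProduct, ← Finset.sum_mul, sq]

lemma Mmat_isSymm : (Mmat G).IsSymm := by
  unfold Mmat
  apply Matrix.IsSymm.add (SimpleGraph.isSymm_lapMatrix ℝ G)
  exact Matrix.IsSymm.smul (by ext i j; simp [Jmat]) _

lemma lap_quad_nonneg (x : Fin n → ℝ) : 0 ≤ x ⬝ᵥ (G.lapMatrix ℝ *ᵥ x) := by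
  have := (SimpleGraph.posSemidef_lapMatrix ℝ G).dotProduct_mulVec_nonneg x
  simpa using this

lemma lap_quad_zero (hG : G.Connected) (x : Fin n → ℝ)
    (h : x ⬝ᵥ (G.lapMatrix ℝ *ᵥ x) = 0) (i j : Fin n) : x i = x j := by
  rw [← Matrix.toLinearMap₂'_apply'] at h
  exact (SimpleGraph.lapMatrix_toLinearMap₂'_apply'_eq_zero_iff_forall_reachable G x).mp h i j
    (hG.preconnected i j)

lemma Mmat_posDef (hn : 0 < n) (hG : G.Connected) : (Mmat G).PosDef := by
  refine Matrix.PosDef.of_dotProduct_mulVec_pos ?_ ?_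
  · rw [Matrix.IsHermitian, Matrix.conjTranspose_eq_transpose_of_trivial, (Mmat_isSymm G).eq]
  · intro x hx
    simp only [star_trivial, Mmat, Matrix.add_mulVec, Matrix.smul_mulVec,
      dotProduct_add, dotProduct_smul, smul_eq_mul, dot_J]
    rcases lt_or_eq_of_le (lap_quad_nonneg G x) with hpos | hzero
    · have : 0 ≤ (n : ℝ)⁻¹ * (∑ i, x i)^2 := by positivity
      linarith
    · have hconst : ∀ i j, x i = x j := lap_quad_zero G hG x hzero.symm
      obtain ⟨i₀⟩ : Nonempty (Fin n) := ⟨⟨0, hn⟩⟩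
      have hne : x i₀ ≠ 0 := by
        intro h0
        apply hx
        ext j
        rw [hconst j i₀, h0]; rfl
      have hsum : ∑ i, x i = n * x i₀ := by
        rw [Finset.sum_congr rfl fun i _ => hconst i i₀]
        simp [Finset.card_univ, mul_comm]
      rw [← hzero, hsum]
      have : 0 < (n : ℝ)⁻¹ * (n * x i₀)^2 := by positivity
      linarith



lemma dot_bvec (s t : Fin n) (y : Fin n → ℝ) : bvec s t ⬝ᵥ y = y s - y t := by
  simp [bvec, sub_dotProduct, single_dotProduct]

lemma mulVec_bvec (A : Matrix (Fin n) (Fin n) ℝ) (s t : Fin n) :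
    A *ᵥ bvec s t = fun i => A i s - A i t := by
  ext i
  simp [bvec, Matrix.mulVec_sub, Matrix.mulVec_single]

lemma sum_bvec (s t : Fin n) (hst : s ≠ t) : ∑ i, bvec s t i = 0 := by
  simp [bvec, Finset.sum_sub_distrib]

lemma bvec_ne_zero (s t : Fin n) (hst : s ≠ t) : bvec s t ≠ 0 := by
  intro h
  have := congrFun h s
  simp [bvec, Pi.single_apply, hst, hst.symm] at this

variable (hn : 0 < n) (hG : G.Connected)
include hn hG

lemma Mmat_det_isUnit : IsUnit (Mmat G).det :=
  ((Mmat_posDef G hn hG).det_pos).ne'.isUnit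

lemma M_mul_H : Mmat G * Hmat G = 1 :=
  Matrix.mul_nonsing_inv _ (Mmat_det_isUnit G hn hG)

lemma H_mul_M : Hmat G * Mmat G = 1 :=
  Matrix.nonsing_inv_mul _ (Mmat_det_isUnit G hn hG)

lemma Hmat_isSymm : (Hmat G).IsSymm := by
  unfold Hmat Matrix.IsSymm
  rw [Matrix.transpose_nonsing_inv, (Mmat_isSymm G).eq]

lemma M_mulVec_one : Mmat G *ᵥ (fun _ => (1:ℝ)) = fun _ => 1 := by
  unfold Mmat
  rw [Matrix.add_mulVec, SimpleGraph.lapMatrix_mulVec_const_eq_zero, Matrix.smul_mulVec,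
    Jmat_mulVec]
  ext i
  simp [inv_mul_cancel₀ (show (n:ℝ) ≠ 0 by exact_mod_cast hn.ne')]

lemma H_mulVec_one : Hmat G *ᵥ (fun _ => (1:ℝ)) = fun _ => 1 := by
  conv_lhs => rw [← M_mulVec_one G hn hG]
  rw [Matrix.mulVec_mulVec, H_mul_M G hn hG, Matrix.one_mulVec]

lemma J_mul_H : Jmat n * Hmat G = Jmat n := by
  ext i j
  simp only [Jmat, Matrix.mul_apply, Matrix.of_apply, one_mul]
  have : ∑ k, Hmat G k j = ∑ k, Hmat G j k := by
    refine Finset.sum_congr rfl fun k _ => ?_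
    conv_lhs => rw [← (Hmat_isSymm G hn hG).eq]
    rfl
  rw [this]
  have := congrFun (H_mulVec_one G hn hG) j
  simpa [Matrix.mulVec, dotProduct] using this

lemma L_mul_H : G.lapMatrix ℝ * Hmat G = 1 - (n:ℝ)⁻¹ • Jmat n := by
  have h : G.lapMatrix ℝ = Mmat G - (n:ℝ)⁻¹ • Jmat n := by unfold Mmat; ring_nf; abel
  rw [h, Matrix.sub_mul, M_mul_H G hn hG, Matrix.smul_mul, J_mul_H G hn hG]


lemma L_H_bvec (s t : Fin n) (hst : s ≠ t) :
    G.lapMatrix ℝ *ᵥ (Hmat G *ᵥ bvec s t) = bvec s t := by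
  rw [Matrix.mulVec_mulVec, L_mul_H G hn hG, Matrix.sub_mulVec, Matrix.one_mulVec,
    Matrix.smul_mulVec, Jmat_mulVec, sum_bvec s t hst]
  ext i
  simp

lemma effRes_eq (s t : Fin n) (hst : s ≠ t) :
    effRes G s t = bvec s t ⬝ᵥ (Hmat G *ᵥ bvec s t) := by
  set x := Hmat G *ᵥ bvec s t with hx
  set R := bvec s t ⬝ᵥ x with hRdef
  have hLx : G.lapMatrix ℝ *ᵥ x = bvec s t := L_H_bvec G hn hG s t hst
  have hR : 0 < R := by
    have hpd := (Mmat_posDef G hn hG).inv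
    have := hpd.dotProduct_mulVec_pos (bvec_ne_zero s t hst)
    simpa [Hmat, hRdef, hx] using this
  have hxst : x s - x t = R := by rw [hRdef, dot_bvec]
  set S := energy G '' {φ : Fin n → ℝ | φ s = 1 ∧ φ t = 0} with hS
  have hmem : 1/R ∈ S := by
    refine ⟨fun v => R⁻¹ * (x v - x t), ⟨?_, by simp⟩, ?_⟩
    · simp only [hxst, inv_mul_cancel₀ hR.ne']
    · have hφ : (fun v => R⁻¹ * (x v - x t)) = R⁻¹ • x - (R⁻¹ * x t) • (fun _ => (1:ℝ)) := by
        ext v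
        simp [mul_sub]
      rw [energy_eq, hφ, Matrix.mulVec_sub, Matrix.mulVec_smul, Matrix.mulVec_smul, hLx,
        SimpleGraph.lapMatrix_mulVec_const_eq_zero, smul_zero, sub_zero]
      rw [dotProduct_smul, sub_dotProduct, smul_dotProduct, smul_dotProduct,
        dotProduct_comm _ (bvec s t), dot_bvec]
      simp only [smul_eq_mul, hxst]
      have h1 : (fun _ => (1:ℝ)) ⬝ᵥ bvec s t = 0 := by
        simpa [dotProduct] using sum_bvec s t hst
      rw [h1]
      field_simp
      ring
  have hlb : ∀ a ∈ S, 1/R ≤ a := by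
    rintro a ⟨φ, ⟨hφs, hφt⟩, rfl⟩
    rw [energy_eq]
    set c := φ ⬝ᵥ (G.lapMatrix ℝ *ᵥ φ) with hc
    have hp : φ ⬝ᵥ (G.lapMatrix ℝ *ᵥ x) = 1 := by
      rw [hLx, dotProduct_comm, dot_bvec, hφs, hφt, sub_zero]
    have hxLx : x ⬝ᵥ (G.lapMatrix ℝ *ᵥ x) = R := by rw [hLx, dotProduct_comm]
    have hsymm : x ⬝ᵥ (G.lapMatrix ℝ *ᵥ φ) = 1 := by
      rw [dot_symm _ (SimpleGraph.isSymm_lapMatrix ℝ G), hp]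
    have hquad : ∀ τ : ℝ, 0 ≤ R * (τ*τ) + 2 * τ + c := by
      intro τ
      have h0 := lap_quad_nonneg G (φ + τ • x)
      rw [Matrix.mulVec_add, Matrix.mulVec_smul, dotProduct_add, add_dotProduct,
        add_dotProduct, dotProduct_smul, smul_dotProduct, smul_dotProduct,
        dotProduct_smul] at h0
      simp only [smul_eq_mul, hp, hsymm, hxLx, ← hc] at h0
      nlinarith [h0]
    have hd := discrim_le_zero hquad
    rw [discrim] at hd
    rw [div_le_iff₀ hR]
    nlinarith [hd]
  have hsInf : sInf S = 1/R := le_antisymm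
    (csInf_le ⟨1/R, fun a ha => hlb a ha⟩ hmem) (le_csInf ⟨_, hmem⟩ hlb)
  rw [effRes, ← hS, hsInf, one_div_one_div]

end FosterAux

open Classical in
/-- **Foster's theorem.**  For a connected graph `G` on `n ≥ 2` vertices, the sum of the
effective resistances over all edges (written as half the sum over ordered adjacent pairs)
equals `n - 1`. -/
theorem foster_sum_edge_effRes
    (n : ℕ) (hn : 2 ≤ n) (G : SimpleGraph (Fin n)) (hG : G.Connected) :
    (1/2) * ∑ u : Fin n, ∑ v : Fin n, (if G.Adj u v then effRes G u v else 0) =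
      (n : ℝ) - 1 := by
  classical
  letI : DecidableRel G.Adj := Classical.decRel _
  have hn0 : 0 < n := by omega
  have hnR : (n : ℝ) ≠ 0 := by positivity
  set H := FosterAux.Hmat G with hH
  have h1 : ∀ u v : Fin n, (if G.Adj u v then effRes G u v else 0) =
      (if G.Adj u v then (H u u + H v v - H u v - H v u) else 0) := by
    intro u v
    by_cases h : G.Adj u v
    · simp only [h, if_true]
      rw [FosterAux.effRes_eq G hn0 hG u v h.ne, FosterAux.mulVec_bvec, FosterAux.dot_bvec]
      ring
    · simp [h]
  have key : ∀ u : Fin n, (∑ v, (if G.Adj u v then (H u u - H v u) else 0))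
      = 1 - (n : ℝ)⁻¹ := by
    intro u
    have step : (∑ v, (if G.Adj u v then (H u u - H v u) else 0))
        = ∑ v, G.lapMatrix ℝ u v * H v u := by
      have hdeg : ((G.degree u : ℝ)) = ∑ v, if G.Adj u v then (1:ℝ) else 0 :=
        SimpleGraph.degree_eq_sum_if_adj G u
      simp only [SimpleGraph.lapMatrix, SimpleGraph.degMatrix, SimpleGraph.adjMatrix,
        Matrix.sub_apply, Matrix.diagonal_apply, Matrix.of_apply, sub_mul, ite_mul, one_mul,
        zero_mul]
      rw [Finset.sum_sub_distrib, Finset.sum_ite_eq Finset.univ u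
        (fun v => (G.degree u : ℝ) * H v u)]
      simp only [Finset.mem_univ, if_true]
      rw [hdeg, Finset.sum_mul]
      rw [← Finset.sum_sub_distrib]
      refine Finset.sum_congr rfl fun v _ => ?_
      split <;> simp
    rw [step, ← Matrix.mul_apply, hH, FosterAux.L_mul_H G hn0 hG]
    simp [Matrix.one_apply, FosterAux.Jmat]
  have hswap : (∑ u, ∑ v, (if G.Adj u v then (H v v - H u v) else 0))
      = ∑ u, ∑ v, (if G.Adj u v then (H u u - H v u) else 0) := by
    rw [Finset.sum_comm]
    refine Finset.sum_congr rfl fun u _ => Finset.sum_congr rfl fun v _ => ?_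
    exact if_congr (G.adj_comm v u) rfl rfl
  calc (1/2) * ∑ u : Fin n, ∑ v : Fin n, (if G.Adj u v then effRes G u v else 0)
      = (1/2) * ∑ u, ∑ v, (if G.Adj u v then (H u u + H v v - H u v - H v u) else 0) := by
        rw [Finset.sum_congr rfl fun u _ => Finset.sum_congr rfl fun v _ => h1 u v]
    _ = (1/2) * ((∑ u, ∑ v, (if G.Adj u v then (H u u - H v u) else 0))
          + ∑ u, ∑ v, (if G.Adj u v then (H v v - H u v) else 0)) := by
        rw [← Finset.sum_add_distrib]
        congr 1
        refine Finset.sum_congr rfl fun u _ => ?_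
        rw [← Finset.sum_add_distrib]
        refine Finset.sum_congr rfl fun v _ => ?_
        split <;> ring
    _ = ∑ u, ∑ v, (if G.Adj u v then (H u u - H v u) else 0) := by
        rw [hswap]; ring
    _ = ∑ u : Fin n, (1 - (n : ℝ)⁻¹) := Finset.sum_congr rfl fun u _ => key u
    _ = (n : ℝ) - 1 := by
        rw [Finset.sum_const, Finset.card_univ, Fintype.card_fin, nsmul_eq_mul]
        field_simp
end

section
/- Let G = (V,E) be a connected finite simple graph on n ≥ 2 vertices and let u ≠ v be two vertices with degrees d(u) and d(v). Then (1/2)·(1/d(u) + 1/d(v)) ≤ R_G(u,v) ≤ (1/λ₂(L̃_G))·(1/d(u) + 1/d(v)), where λ₂(L̃_G) > 0 is the second-smallest eigenvalue of the normalized Laplacian L̃_G = D_G^{-1/2} (D_G − A_G) D_G^{-1/2}. -/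
open Matrix

open Classical in
/-- The degree of a vertex, as a real number. -/
noncomputable def deg {V : Type*} [Fintype V] (G : SimpleGraph V) (v : V) : ℝ :=
  (G.degree v : ℝ)

/-- The normalized Laplacian `L̃ = D^{-1/2} (D - A) D^{-1/2}`. -/
noncomputable def normLap {n : ℕ} (G : SimpleGraph (Fin n)) : Matrix (Fin n) (Fin n) ℝ :=
  Matrix.diagonal (fun v => (Real.sqrt (deg G v))⁻¹) * lap G *
    Matrix.diagonal (fun v => (Real.sqrt (deg G v))⁻¹)

-- auxiliary lemmas

lemma dot_diag_mulVec {n : ℕ} (d a z : Fin n → ℝ) :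
    a ⬝ᵥ (Matrix.diagonal d *ᵥ z) = (Matrix.diagonal d *ᵥ a) ⬝ᵥ z := by
  unfold dotProduct
  refine Finset.sum_congr rfl fun i _ => ?_
  rw [mulVec_diagonal, mulVec_diagonal]
  ring

open Classical in
lemma energy_eq_quadForm {n : ℕ} (G : SimpleGraph (Fin n)) (φ : Fin n → ℝ) :
    energy G φ = φ ⬝ᵥ (lap G *ᵥ φ) := by
  rw [show φ ⬝ᵥ (lap G *ᵥ φ) = Matrix.toLinearMap₂' ℝ (G.lapMatrix ℝ) φ φ from
    (Matrix.toLinearMap₂'_apply' _ _ _).symm, SimpleGraph.lapMatrix_toLinearMap₂']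
  unfold energy
  ring

open Classical in
lemma deg_pos {n : ℕ} (hn : 2 ≤ n) (G : SimpleGraph (Fin n)) (hG : G.Connected) (i : Fin n) :
    0 < deg G i := by
  unfold deg
  have : Nontrivial (Fin n) := ⟨⟨⟨0, by omega⟩, ⟨1, Nat.lt_of_lt_of_le one_lt_two hn⟩, by simp [Fin.ext_iff]⟩⟩
  obtain ⟨j, hj⟩ := exists_ne i
  obtain ⟨p⟩ := hG.preconnected i j
  have hadj : ∃ w, G.Adj i w := by
    cases p with
    | nil => exact absurd rfl (Ne.symm hj)
    | cons h q => exact ⟨_, h⟩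
  have := (G.degree_pos_iff_exists_adj i).mpr hadj
  exact_mod_cast this

open Classical in
lemma energy_indicator {n : ℕ} (G : SimpleGraph (Fin n)) (w : Fin n) :
    energy G (fun i => if i = w then (1:ℝ) else 0) = deg G w := by
  rw [energy_eq_quadForm]
  unfold dotProduct
  rw [Finset.sum_eq_single w]
  · have : (lap G *ᵥ fun i => if i = w then (1:ℝ) else 0) w
        = deg G w * 1 - ∑ j ∈ G.neighborFinset w, (if j = w then (1:ℝ) else 0) := by
      unfold lap deg
      rw [SimpleGraph.lapMatrix_mulVec_apply]
      simp
    rw [this, Finset.sum_ite_eq' (G.neighborFinset w) w (fun _ => (1:ℝ))]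
    simp [SimpleGraph.mem_neighborFinset]
  · intro i _ hi
    simp [hi]
  · intro h
    exact absurd (Finset.mem_univ w) h

open Classical in
lemma energy_shift {n : ℕ} (G : SimpleGraph (Fin n)) (φ : Fin n → ℝ) (c : ℝ) :
    energy G (fun i => φ i - c) = energy G φ := by
  unfold energy
  congr 1
  refine Finset.sum_congr rfl fun i _ => Finset.sum_congr rfl fun j _ => ?_
  split_ifs with h
  · ring
  · rfl

open Classical in
lemma energy_one_sub_indicator {n : ℕ} (G : SimpleGraph (Fin n)) (w : Fin n) :
    energy G (fun i => if i = w then (0:ℝ) else 1) = deg G w := by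
  rw [← energy_indicator G w]
  unfold energy
  congr 1
  refine Finset.sum_congr rfl fun i _ => Finset.sum_congr rfl fun j _ => ?_
  by_cases hadj : G.Adj i j
  · rw [if_pos hadj, if_pos hadj]
    by_cases hi : i = w <;> by_cases hj : j = w <;> simp [hi, hj]
  · rw [if_neg hadj, if_neg hadj]

open scoped RealInnerProductSpace

lemma euclid_inner_eq_dot {n : ℕ} (a c : EuclideanSpace ℝ (Fin n)) :
    ⟪a, c⟫ = (a : Fin n → ℝ) ⬝ᵥ (c : Fin n → ℝ) := by
  simp [PiLp.inner_apply, dotProduct, RCLike.inner_apply]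
  exact Finset.sum_congr rfl fun _ _ => mul_comm _ _

lemma rayleigh_decomp {n : ℕ} {A : Matrix (Fin n) (Fin n) ℝ} (hA : A.IsHermitian)
    (x : Fin n → ℝ) :
    x ⬝ᵥ (A *ᵥ x) = ∑ i, hA.eigenvalues i * ((hA.eigenvectorBasis i : Fin n → ℝ) ⬝ᵥ x) ^ 2 ∧
      x ⬝ᵥ x = ∑ i, ((hA.eigenvectorBasis i : Fin n → ℝ) ⬝ᵥ x) ^ 2 := by
  set b := hA.eigenvectorBasis with hb
  have hdot := fun a c => euclid_inner_eq_dot (n := n) a c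
  have hAt : Aᵀ = A := by
    have := hA.eq
    rwa [conjTranspose_eq_transpose_of_trivial] at this
  have hbi : ∀ i, (b i : Fin n → ℝ) ⬝ᵥ (A *ᵥ x) = hA.eigenvalues i * ((b i : Fin n → ℝ) ⬝ᵥ x) := by
    intro i
    have h5 : A *ᵥ (b i : Fin n → ℝ) = hA.eigenvalues i • (b i : Fin n → ℝ) :=
      hA.mulVec_eigenvectorBasis i
    rw [dotProduct_mulVec, ← mulVec_transpose, hAt, h5, smul_dotProduct, smul_eq_mul]
  constructor
  · have := b.sum_inner_mul_inner (WithLp.toLp 2 x : EuclideanSpace ℝ (Fin n)) (WithLp.toLp 2 (A *ᵥ x) : EuclideanSpace ℝ (Fin n))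
    simp only [hdot, WithLp.ofLp_toLp] at this
    rw [← this]
    refine Finset.sum_congr rfl fun i _ => ?_
    rw [dotProduct_comm (x : Fin n → ℝ), hbi i]
    ring
  · have := b.sum_inner_mul_inner (WithLp.toLp 2 x : EuclideanSpace ℝ (Fin n)) (WithLp.toLp 2 x : EuclideanSpace ℝ (Fin n))
    simp only [hdot, WithLp.ofLp_toLp] at this
    rw [← this]
    refine Finset.sum_congr rfl fun i _ => ?_
    rw [dotProduct_comm (x : Fin n → ℝ)]
    ring

lemma key_spectral {n : ℕ} (hn : 1 < n) {A : Matrix (Fin n) (Fin n) ℝ} (hA : A.PosSemidef)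
    (w0 : Fin n → ℝ) (hw0 : w0 ≠ 0) (hAw0 : A *ᵥ w0 = 0)
    (hker : ∀ y : Fin n → ℝ, A *ᵥ y = 0 → ∃ c : ℝ, y = c • w0) :
    0 < sortedEigenvalues A ⟨1, hn⟩ ∧
      ∀ x : Fin n → ℝ, w0 ⬝ᵥ x = 0 →
        sortedEigenvalues A ⟨1, hn⟩ * (x ⬝ᵥ x) ≤ x ⬝ᵥ (A *ᵥ x) := by
  have hH := hA.isHermitian
  set b := hH.eigenvectorBasis with hb
  set μ := hH.eigenvalues with hμ
  set σ := Tuple.sort μ with hσ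
  have h0n : 0 < n := by omega
  have hsorted : sortedEigenvalues A ⟨1, hn⟩ = μ (σ ⟨1, hn⟩) := by
    rw [sortedEigenvalues, dif_pos hH]; rfl
  have hmono : Monotone (μ ∘ σ) := Tuple.monotone_sort μ
  have hnn : ∀ i, 0 ≤ μ i := hA.eigenvalues_nonneg
  have hker_b : ∀ i, μ i = 0 → ∃ c : ℝ, c ≠ 0 ∧ (b i : Fin n → ℝ) = c • w0 := by
    intro i hi
    have h5 : A *ᵥ (b i : Fin n → ℝ) = μ i • (b i : Fin n → ℝ) := hH.mulVec_eigenvectorBasis i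
    rw [hi, zero_smul] at h5
    obtain ⟨c, hc⟩ := hker _ h5
    refine ⟨c, ?_, hc⟩
    rintro rfl
    rw [zero_smul] at hc
    exact b.orthonormal.ne_zero i (by rw [← WithLp.toLp_ofLp (x := b i), hc]; simp)
  -- w0 has positive norm
  have hw0pos : 0 < w0 ⬝ᵥ w0 := by
    have hnn0 : 0 ≤ w0 ⬝ᵥ w0 := Finset.sum_nonneg fun i _ => mul_self_nonneg _
    rcases hnn0.lt_or_eq with h | h
    · exact h
    · exact absurd (dotProduct_self_eq_zero.mp h.symm) hw0
  -- zero is an eigenvalue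
  have hzero : ∃ i, μ i = 0 := by
    have h1 := (rayleigh_decomp hH w0).1
    have h2 := (rayleigh_decomp hH w0).2
    rw [hAw0, dotProduct_zero] at h1
    have hterm : ∀ i ∈ Finset.univ, (0:ℝ) ≤ μ i * ((b i : Fin n → ℝ) ⬝ᵥ w0) ^ 2 :=
      fun i _ => mul_nonneg (hnn i) (sq_nonneg _)
    have hall := (Finset.sum_eq_zero_iff_of_nonneg hterm).mp h1.symm
    have hex : ∃ i, (b i : Fin n → ℝ) ⬝ᵥ w0 ≠ 0 := by
      by_contra hcon
      push_neg at hcon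
      rw [h2] at hw0pos
      have : ∑ i, ((b i : Fin n → ℝ) ⬝ᵥ w0) ^ 2 = 0 :=
        Finset.sum_eq_zero fun i _ => by rw [hcon i]; ring
      rw [this] at hw0pos; exact lt_irrefl _ hw0pos
    obtain ⟨i, hi⟩ := hex
    refine ⟨i, ?_⟩
    have := hall i (Finset.mem_univ i)
    rcases mul_eq_zero.mp this with h | h
    · exact h
    · exact absurd ((pow_eq_zero_iff two_ne_zero).mp h) hi
  have hσ0 : μ (σ ⟨0, h0n⟩) = 0 := by
    obtain ⟨i0, hi0⟩ := hzero
    refine le_antisymm ?_ (hnn _)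
    have hle : (⟨0, h0n⟩ : Fin n) ≤ σ.symm i0 := by simp [Fin.le_def]
    have := hmono hle
    simp only [Function.comp_apply, Equiv.apply_symm_apply] at this
    rwa [hi0] at this
  have hpos : 0 < μ (σ ⟨1, hn⟩) := by
    rcases (hnn (σ ⟨1, hn⟩)).lt_or_eq with h | h
    · exact h
    · exfalso
      have hσ1 : μ (σ ⟨1, hn⟩) = 0 := h.symm
      obtain ⟨c, hc0, hbc⟩ := hker_b _ hσ0
      obtain ⟨d, hd0, hbd⟩ := hker_b _ hσ1
      have hne : σ ⟨0, h0n⟩ ≠ σ ⟨1, hn⟩ := by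
        intro hcon
        have := σ.injective hcon
        simp [Fin.ext_iff] at this
      have horth : ⟪b (σ ⟨0, h0n⟩), b (σ ⟨1, hn⟩)⟫ = 0 := b.orthonormal.2 hne
      rw [euclid_inner_eq_dot, hbc, hbd, smul_dotProduct, dotProduct_smul] at horth
      simp only [smul_eq_mul] at horth
      rcases mul_eq_zero.mp horth with h' | h'
      · exact hc0 h'
      · rcases mul_eq_zero.mp h' with h'' | h''
        · exact hd0 h''
        · exact absurd h'' (ne_of_gt hw0pos)
  rw [hsorted]
  refine ⟨hpos, fun x hx => ?_⟩
  have hcoef : ∀ i, μ i = 0 → (b i : Fin n → ℝ) ⬝ᵥ x = 0 := by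
    intro i hi
    obtain ⟨c, _, hbc⟩ := hker_b i hi
    rw [hbc, smul_dotProduct, smul_eq_mul, dotProduct_comm] at *
    rw [hx, mul_zero]
  rw [(rayleigh_decomp hH x).1, (rayleigh_decomp hH x).2, Finset.mul_sum]
  refine Finset.sum_le_sum fun i _ => ?_
  by_cases hμi : μ i = 0
  · rw [hcoef i hμi]; simp
  · refine mul_le_mul_of_nonneg_right ?_ (sq_nonneg _)
    have hji : σ (σ.symm i) = i := σ.apply_symm_apply i
    have hjne : σ.symm i ≠ ⟨0, h0n⟩ := by
      intro hcon
      apply hμi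
      rw [← hji, hcon, hσ0]
    have hle : (⟨1, hn⟩ : Fin n) ≤ σ.symm i := by
      rw [Fin.le_def]
      have h2v : (σ.symm i).val ≠ 0 := fun hc => hjne (Fin.ext hc)
      have h1v : ((⟨1, hn⟩ : Fin n)).val = 1 := rfl
      omega
    have := hmono hle
    simp only [Function.comp_apply, hji] at this
    exact this

open Classical in
lemma normLap_spec {n : ℕ} (hn : 2 ≤ n) (G : SimpleGraph (Fin n)) (hG : G.Connected) :
    0 < sortedEigenvalues (normLap G) ⟨1, Nat.lt_of_lt_of_le one_lt_two hn⟩ ∧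
      ∀ x : Fin n → ℝ, (fun i => Real.sqrt (deg G i)) ⬝ᵥ x = 0 →
        sortedEigenvalues (normLap G) ⟨1, Nat.lt_of_lt_of_le one_lt_two hn⟩ * (x ⬝ᵥ x) ≤ x ⬝ᵥ (normLap G *ᵥ x) := by
  have hd : ∀ i, 0 < deg G i := deg_pos hn G hG
  set s : Fin n → ℝ := fun i => Real.sqrt (deg G i) with hs
  have hspos : ∀ i, 0 < s i := fun i => Real.sqrt_pos.mpr (hd i)
  set B : Matrix (Fin n) (Fin n) ℝ := Matrix.diagonal (fun i => (s i)⁻¹) with hB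
  have hnl : normLap G = B * lap G * B := rfl
  have hBH : Bᴴ = B := by
    rw [hB, diagonal_conjTranspose]
    congr 1
  have hpsd : (normLap G).PosSemidef := by
    have h := (SimpleGraph.posSemidef_lapMatrix ℝ G).conjTranspose_mul_mul_same B
    rw [hBH] at h
    rw [hnl]
    exact h
  have hw0 : s ≠ 0 := by
    intro hcon
    have := congrFun hcon ⟨0, by omega⟩
    exact absurd this (ne_of_gt (hspos _))
  have hBw0 : B *ᵥ s = fun _ => 1 := by
    funext i
    rw [hB, mulVec_diagonal]
    exact inv_mul_cancel₀ (ne_of_gt (hspos i))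
  have hAw0 : normLap G *ᵥ s = 0 := by
    rw [hnl, ← mulVec_mulVec, ← mulVec_mulVec, hBw0]
    show B *ᵥ (G.lapMatrix ℝ *ᵥ fun _ => 1) = 0
    rw [SimpleGraph.lapMatrix_mulVec_const_eq_zero, mulVec_zero]
  have hker : ∀ y : Fin n → ℝ, normLap G *ᵥ y = 0 → ∃ c : ℝ, y = c • s := by
    intro y hy
    set ψ : Fin n → ℝ := B *ᵥ y with hψ
    have hq : ψ ⬝ᵥ (lap G *ᵥ ψ) = 0 := by
      have h1 : ψ ⬝ᵥ (lap G *ᵥ ψ) = y ⬝ᵥ (normLap G *ᵥ y) := by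
        rw [hψ, hB, ← dot_diag_mulVec, hnl, hB, ← mulVec_mulVec, ← mulVec_mulVec]
      rw [h1, hy, dotProduct_zero]
    have hconst := (SimpleGraph.lapMatrix_toLinearMap₂'_apply'_eq_zero_iff_forall_reachable
      G ψ).mp (by rw [Matrix.toLinearMap₂'_apply']; exact hq)
    refine ⟨ψ ⟨0, by omega⟩, ?_⟩
    funext i
    have hψi : ψ i = (s i)⁻¹ * y i := by rw [hψ, hB, mulVec_diagonal]
    have hci : ψ i = ψ ⟨0, by omega⟩ := hconst i _ (hG.preconnected i _)
    have : s i * ψ i = y i := by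
      rw [hψi, mul_inv_cancel_left₀ (ne_of_gt (hspos i))]
    rw [Pi.smul_apply, smul_eq_mul, ← hci, ← this]
    ring
  exact key_spectral (by omega) hpsd s hw0 hAw0 hker

open Classical in
lemma energy_lower_bound {n : ℕ} (hn : 2 ≤ n) (G : SimpleGraph (Fin n)) (hG : G.Connected)
    (u v : Fin n) (huv : u ≠ v) (φ : Fin n → ℝ) (hφu : φ u = 1) (hφv : φ v = 0) :
    sortedEigenvalues (normLap G) ⟨1, Nat.lt_of_lt_of_le one_lt_two hn⟩ *
      (deg G u * deg G v / (deg G u + deg G v)) ≤ energy G φ := by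
  have hd : ∀ i, 0 < deg G i := deg_pos hn G hG
  obtain ⟨hlpos, hbound⟩ := normLap_spec hn G hG
  set s : Fin n → ℝ := fun i => Real.sqrt (deg G i) with hs
  have hspos : ∀ i, 0 < s i := fun i => Real.sqrt_pos.mpr (hd i)
  have hss : ∀ i, s i * s i = deg G i := fun i => Real.mul_self_sqrt (hd i).le
  set T : ℝ := ∑ i, deg G i with hT
  have hTpos : 0 < T := Finset.sum_pos (fun i _ => hd i) ⟨u, Finset.mem_univ u⟩
  set cst : ℝ := (∑ i, deg G i * φ i) / T with hcst
  set ψ : Fin n → ℝ := fun i => φ i - cst with hψ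
  set x : Fin n → ℝ := fun i => s i * ψ i with hx
  -- orthogonality
  have horth : s ⬝ᵥ x = 0 := by
    have h1 : s ⬝ᵥ x = ∑ i, deg G i * ψ i := by
      unfold dotProduct
      refine Finset.sum_congr rfl fun i _ => ?_
      rw [hx, ← mul_assoc, hss]
    rw [h1]
    have h2 : ∑ i, deg G i * ψ i = (∑ i, deg G i * φ i) - cst * T := by
      rw [hψ]
      simp only [mul_sub]
      rw [Finset.sum_sub_distrib, ← Finset.sum_mul, hT]
      ring
    rw [h2, hcst]
    field_simp
    simp
  -- energy equals quadratic form in x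
  have hBx : Matrix.diagonal (fun i => (s i)⁻¹) *ᵥ x = ψ := by
    funext i
    rw [mulVec_diagonal]
    simp only [hx]
    exact inv_mul_cancel_left₀ (ne_of_gt (hspos i)) _
  have hene : energy G φ = x ⬝ᵥ (normLap G *ᵥ x) := by
    have h1 : energy G φ = energy G ψ := (energy_shift G φ cst).symm
    have h2 : x ⬝ᵥ (normLap G *ᵥ x) = ψ ⬝ᵥ (lap G *ᵥ ψ) := by
      show x ⬝ᵥ ((Matrix.diagonal (fun i => (Real.sqrt (deg G i))⁻¹) * lap G *
        Matrix.diagonal (fun i => (Real.sqrt (deg G i))⁻¹)) *ᵥ x) = _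
      rw [← mulVec_mulVec, ← mulVec_mulVec, dot_diag_mulVec]
      rw [show Matrix.diagonal (fun i => (Real.sqrt (deg G i))⁻¹) *ᵥ x = ψ from hBx]
    rw [h1, h2, energy_eq_quadForm]
  -- norm lower bound
  have hxx : deg G u * deg G v / (deg G u + deg G v) ≤ x ⬝ᵥ x := by
    have hsub : x u * x u + x v * x v ≤ x ⬝ᵥ x := by
      have h3 : ({u, v} : Finset (Fin n)) ⊆ Finset.univ := Finset.subset_univ _
      have h4 := Finset.sum_le_sum_of_subset_of_nonneg h3
        (fun i _ _ => mul_self_nonneg (x i))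
      rwa [Finset.sum_pair huv] at h4
    have hxu : x u * x u = deg G u * (ψ u * ψ u) := by
      simp only [hx]
      rw [show (s u * ψ u) * (s u * ψ u) = (s u * s u) * (ψ u * ψ u) from by ring, hss u]
    have hxv : x v * x v = deg G v * (ψ v * ψ v) := by
      simp only [hx]
      rw [show (s v * ψ v) * (s v * ψ v) = (s v * s v) * (ψ v * ψ v) from by ring, hss v]
    have hdiff : ψ u - ψ v = 1 := by rw [hψ]; simp [hφu, hφv]
    have hkey : deg G u * deg G v / (deg G u + deg G v)
        ≤ deg G u * (ψ u * ψ u) + deg G v * (ψ v * ψ v) := by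
      have hdu := hd u
      have hdv := hd v
      have hsum : 0 < deg G u + deg G v := by linarith
      have hd2 : (ψ u - ψ v)^2 = 1 := by rw [hdiff]; norm_num
      rw [div_le_iff₀ hsum]
      have key : (deg G u * (ψ u * ψ u) + deg G v * (ψ v * ψ v)) * (deg G u + deg G v)
          = (deg G u * ψ u + deg G v * ψ v)^2
            + deg G u * deg G v * (ψ u - ψ v)^2 := by ring
      rw [key, hd2]
      nlinarith [sq_nonneg (deg G u * ψ u + deg G v * ψ v)]
    calc deg G u * deg G v / (deg G u + deg G v)
        ≤ deg G u * (ψ u * ψ u) + deg G v * (ψ v * ψ v) := hkey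
      _ = x u * x u + x v * x v := by rw [hxu, hxv]
      _ ≤ x ⬝ᵥ x := hsub
  calc sortedEigenvalues (normLap G) ⟨1, Nat.lt_of_lt_of_le one_lt_two hn⟩ *
      (deg G u * deg G v / (deg G u + deg G v))
      ≤ sortedEigenvalues (normLap G) ⟨1, Nat.lt_of_lt_of_le one_lt_two hn⟩ * (x ⬝ᵥ x) :=
        mul_le_mul_of_nonneg_left hxx hlpos.le
    _ ≤ x ⬝ᵥ (normLap G *ᵥ x) := hbound x horth
    _ = energy G φ := hene.symm

/-- **Degree bounds on effective resistance.**
For a connected graph `G` on `n ≥ 2` vertices and distinct vertices `u, v`,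
`(1/2)(1/d(u) + 1/d(v)) ≤ R_G(u,v) ≤ (1/λ₂(L̃_G)) (1/d(u) + 1/d(v))`,
where `λ₂(L̃_G)` is the second-smallest eigenvalue of the normalized Laplacian. -/
theorem effRes_degree_bounds
    (n : ℕ) (hn : 2 ≤ n) (G : SimpleGraph (Fin n)) (hG : G.Connected)
    (u v : Fin n) (huv : u ≠ v) :
    (1/2) * (1 / deg G u + 1 / deg G v) ≤ effRes G u v ∧
      effRes G u v ≤
        (1 / sortedEigenvalues (normLap G) ⟨1, by omega⟩) * (1 / deg G u + 1 / deg G v) := by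
  classical
  have hn1 : 1 < n := by omega
  have hdu := deg_pos hn G hG u
  have hdv := deg_pos hn G hG v
  obtain ⟨hlpos0, -⟩ := normLap_spec hn G hG
  have hlpos : 0 < sortedEigenvalues (normLap G) ⟨1, hn1⟩ := hlpos0
  set lam : ℝ := sortedEigenvalues (normLap G) ⟨1, hn1⟩ with hlam
  set c0 : ℝ := deg G u * deg G v / (deg G u + deg G v) with hc0
  have hc0pos : 0 < c0 := div_pos (mul_pos hdu hdv) (by linarith)
  set S := energy G '' {φ : Fin n → ℝ | φ u = 1 ∧ φ v = 0} with hS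
  have hlow : ∀ e ∈ S, lam * c0 ≤ e := by
    rintro e ⟨φ, ⟨hφu, hφv⟩, rfl⟩
    exact energy_lower_bound hn G hG u v huv φ hφu hφv
  have hbdd : BddBelow S := ⟨lam * c0, hlow⟩
  have hmemu : deg G u ∈ S := by
    refine ⟨fun i => if i = u then 1 else 0, ⟨if_pos rfl, if_neg (Ne.symm huv)⟩, ?_⟩
    exact energy_indicator G u
  have hmemv : deg G v ∈ S := by
    refine ⟨fun i => if i = v then 0 else 1, ⟨if_neg huv, if_pos rfl⟩, ?_⟩
    exact energy_one_sub_indicator G v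
  have hSne : S.Nonempty := ⟨_, hmemu⟩
  have hinf_ge : lam * c0 ≤ sInf S := le_csInf hSne hlow
  have hinf_pos : 0 < sInf S := lt_of_lt_of_le (mul_pos hlpos hc0pos) hinf_ge
  have hinf_le_u : sInf S ≤ deg G u := csInf_le hbdd hmemu
  have hinf_le_v : sInf S ≤ deg G v := csInf_le hbdd hmemv
  have heff : effRes G u v = 1 / sInf S := rfl
  refine ⟨?_, ?_⟩
  · rw [heff]
    have h1 : 1 / deg G u ≤ 1 / sInf S := one_div_le_one_div_of_le hinf_pos hinf_le_u
    have h2 : 1 / deg G v ≤ 1 / sInf S := one_div_le_one_div_of_le hinf_pos hinf_le_v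
    linarith
  · show effRes G u v ≤ (1 / lam) * (1 / deg G u + 1 / deg G v)
    rw [heff]
    have h1 : 1 / sInf S ≤ 1 / (lam * c0) :=
      one_div_le_one_div_of_le (mul_pos hlpos hc0pos) hinf_ge
    have h2 : 1 / (lam * c0) = (1 / lam) * (1 / deg G u + 1 / deg G v) := by
      rw [hc0]
      rw [div_eq_iff (by positivity), hlam] at *
      field_simp
      have hl : sortedEigenvalues (normLap G) ⟨1, hn1⟩ ≠ 0 := hlpos.ne'
      ring_nf
      field_simp [hl]
    rw [← h2]
    exact h1
end
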